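/- Let (Σ, μ) be a probability space, f : Σ → Σ a bi-measurable invertible map preserving μ, with μ ergodic, and let τ ∈ L¹(μ) with τ > 0. Let h₁ : Σ → ℝ be measurable and c > 0 be such that 0 ≤ h₁(x) and h₁(x) + c ≤ τ(x) for all x in a measurable set I with μ(I) > 0 (and h₂ := h₁ + c on I). Define for x ∈ I and t ∈ [h₁(x), h₁(x)+c] the return time N(x,t) = τ^{n_I}(x) − t + h₁(f^{n_I(x)}(x)), where n_I(x) = inf{k ≥ 1 : f^k(x) ∈ I} and τ^{n_I}(x) = Σ_{k=0}^{n_I(x)-1} τ(f^k(x)). Then (1/(c·μ(I))) ∫_I ∫_{h₁(x)}^{h₁(x)+c} N(x,t) dt dμ(x) = c/2 + (1/μ(I)) ∫_Σ (τ − c·χ_I) dμ, where χ_I is the indicator function of I. -/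

import Mathlib

open MeasureTheory

/-- The first return time to a set `A` under the map `f`:
`n_A(x) = inf {k ≥ 1 : f^k(x) ∈ A}` (with the convention `sInf ∅ = 0`). -/
noncomputable def retTime {X : Type*} (f : X → X) (A : Set X) (x : X) : ℕ :=
  sInf {k : ℕ | 1 ≤ k ∧ f^[k] x ∈ A}

section KacAux

open Set Function ENNReal


lemma kacAux_ae_return {X : Type*} [MeasurableSpace X] (μ : Measure X) [IsProbabilityMeasure μ]
    (g : X → X) (hg : Ergodic g μ) (I : Set X) (hI : MeasurableSet I) (hIpos : 0 < μ I) :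
    ∀ᵐ x ∂μ, ∃ n : ℕ, g^[n + 1] x ∈ I := by
  have hgm : Measurable g := hg.toMeasurePreserving.measurable
  set J := ⋃ n : ℕ, g^[n + 1] ⁻¹' I with hJ
  have hJm : MeasurableSet J := MeasurableSet.iUnion fun n => (hgm.iterate (n + 1)) hI
  have hsub : g ⁻¹' J ⊆ J := by
    rw [hJ, preimage_iUnion]
    refine iUnion_subset fun n => ?_
    rw [← preimage_comp, ← Function.iterate_succ]
    exact subset_iUnion (fun n : ℕ => g^[n + 1] ⁻¹' I) (n + 1)
  rcases hg.ae_empty_or_univ_of_preimage_ae_le' hJm.nullMeasurableSet hsub.eventuallyLE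
      (measure_ne_top μ J) with h | h
  · exfalso
    have h0 : μ J = 0 := ae_eq_empty.mp h
    have h1 : μ (g^[1] ⁻¹' I) ≤ μ J := measure_mono (subset_iUnion (fun n : ℕ => g^[n + 1] ⁻¹' I) 0)
    have h2 : μ (g^[1] ⁻¹' I) = μ I := by
      simpa using hg.measure_preimage hI.nullMeasurableSet
    rw [h0, h2] at h1
    exact absurd (le_antisymm h1 (by positivity)) hIpos.ne'
  · have := ae_eq_univ.mp h
    filter_upwards [show ∀ᵐ x ∂μ, x ∈ J from ae_iff.mpr this] with x hx
    simpa [hJ] using hx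



lemma retTime_spec {X : Type*} {f : X → X} {A : Set X} {x : X}
    (h : ∃ n : ℕ, f^[n + 1] x ∈ A) :
    1 ≤ retTime f A x ∧ f^[retTime f A x] x ∈ A ∧
      ∀ k, 1 ≤ k → k < retTime f A x → f^[k] x ∉ A := by
  obtain ⟨n, hn⟩ := h
  have hne : {k : ℕ | 1 ≤ k ∧ f^[k] x ∈ A}.Nonempty := ⟨n + 1, Nat.succ_le_succ n.zero_le, hn⟩
  have hmem : retTime f A x ∈ {k : ℕ | 1 ≤ k ∧ f^[k] x ∈ A} := Nat.sInf_mem hne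
  refine ⟨hmem.1, hmem.2, fun k hk1 hk2 hkA => ?_⟩
  have hle : retTime f A x ≤ k :=
    Nat.sInf_le (show k ∈ {k : ℕ | 1 ≤ k ∧ f^[k] x ∈ A} from ⟨hk1, hkA⟩)
  omega

lemma retTime_eq_iff {X : Type*} {f : X → X} {A : Set X} {x : X} {n : ℕ} (hn : 1 ≤ n) :
    retTime f A x = n ↔ f^[n] x ∈ A ∧ ∀ k, 1 ≤ k → k < n → f^[k] x ∉ A := by
  constructor
  · intro h
    have hne : {k : ℕ | 1 ≤ k ∧ f^[k] x ∈ A}.Nonempty := by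
      rcases Set.eq_empty_or_nonempty {k : ℕ | 1 ≤ k ∧ f^[k] x ∈ A} with he | h'
      · exfalso
        have h0 : retTime f A x = 0 := by unfold retTime; rw [he]; exact Nat.sInf_empty
        omega
      · exact h'
    have hmem : retTime f A x ∈ {k : ℕ | 1 ≤ k ∧ f^[k] x ∈ A} := Nat.sInf_mem hne
    rw [h] at hmem
    refine ⟨hmem.2, fun k hk1 hk2 hkA => ?_⟩
    have hle : retTime f A x ≤ k :=
      Nat.sInf_le (show k ∈ {k : ℕ | 1 ≤ k ∧ f^[k] x ∈ A} from ⟨hk1, hkA⟩)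
    omega
  · rintro ⟨h1, h2⟩
    have hne : {k : ℕ | 1 ≤ k ∧ f^[k] x ∈ A}.Nonempty := ⟨n, hn, h1⟩
    have hmem : retTime f A x ∈ {k : ℕ | 1 ≤ k ∧ f^[k] x ∈ A} := Nat.sInf_mem hne
    have hle : retTime f A x ≤ n :=
      Nat.sInf_le (show n ∈ {k : ℕ | 1 ≤ k ∧ f^[k] x ∈ A} from ⟨hn, h1⟩)
    rcases lt_or_eq_of_le hle with hlt | heq
    · exact absurd hmem.2 (h2 _ hmem.1 hlt)
    · exact heq

lemma measurable_retTime {X : Type*} [MeasurableSpace X] {f : X → X} (hf : Measurable f)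
    {A : Set X} (hA : MeasurableSet A) : Measurable (retTime f A) := by
  refine measurable_to_countable' fun n => ?_
  rcases Nat.eq_zero_or_pos n with rfl | hn
  · have hset : retTime f A ⁻¹' {0} = ⋂ k : ℕ, f^[k + 1] ⁻¹' Aᶜ := by
      ext x
      simp only [mem_preimage, mem_singleton_iff, mem_iInter, mem_compl_iff]
      constructor
      · intro h k hk
        have := retTime_spec (f := f) (A := A) (x := x) ⟨k, hk⟩
        omega
      · intro h
        have : {k : ℕ | 1 ≤ k ∧ f^[k] x ∈ A} = ∅ := by
          ext k
          simp only [mem_setOf_eq, mem_empty_iff_false, iff_false, not_and]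
          intro hk1 hk2
          exact h (k - 1) (by simpa [Nat.sub_add_cancel hk1] using hk2)
        unfold retTime; rw [this]; exact Nat.sInf_empty
    rw [hset]
    exact MeasurableSet.iInter fun k => (hf.iterate (k + 1)) hA.compl
  · have hset : retTime f A ⁻¹' {n} =
        f^[n] ⁻¹' A ∩ ⋂ (k : ℕ) (_ : 1 ≤ k) (_ : k < n), f^[k] ⁻¹' Aᶜ := by
      ext x
      simp only [mem_preimage, mem_singleton_iff, mem_inter_iff, mem_iInter, mem_compl_iff]
      rw [retTime_eq_iff hn]
    rw [hset]
    exact ((hf.iterate n) hA).inter <| MeasurableSet.iInter fun k =>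
      MeasurableSet.iInter fun _ => MeasurableSet.iInter fun _ => (hf.iterate k) hA.compl

lemma kac_core {X : Type*} [MeasurableSpace X] (μ : Measure X) [IsProbabilityMeasure μ]
    (f : X → X) (herg : Ergodic f μ) (e : X ≃ᵐ X) (hef : ⇑e = f)
    (I : Set X) (hI : MeasurableSet I) (hIpos : 0 < μ I)
    (g : X → ℝ) (hgm : Measurable g) (hg : Integrable g μ) :
    Integrable (I.indicator fun x => ∑ k ∈ Finset.range (retTime f I x), g (f^[k] x)) μ ∧
    ∫ x, I.indicator (fun x => ∑ k ∈ Finset.range (retTime f I x), g (f^[k] x)) x ∂μ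
      = ∫ x, g x ∂μ := by
  have hmp : MeasurePreserving f μ μ := herg.toMeasurePreserving
  have hfm : Measurable f := hmp.measurable
  have hmpe : MeasurePreserving (⇑e) μ μ := by rw [hef]; exact hmp
  have hmps : MeasurePreserving (⇑e.symm) μ μ := MeasurePreserving.symm e hmpe
  -- ergodicity of the inverse
  have hergs : Ergodic (⇑e.symm) μ := by
    refine ⟨hmps, ⟨fun s hs hinv => ?_⟩⟩
    have h1 : ⇑e ⁻¹' (⇑e.symm ⁻¹' s) = ⇑e ⁻¹' s := by rw [hinv]
    rw [← preimage_comp, e.symm_comp_self, preimage_id] at h1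
    exact herg.toPreErgodic.aeconst_set hs (by rw [← hef, ← h1])
  -- the levels of the Kakutani skyscraper
  set L : ℕ → Set X := fun n =>
    (⇑e.symm)^[n] ⁻¹' I ∩ ⋂ (j : ℕ) (_ : j < n), (⇑e.symm)^[j] ⁻¹' Iᶜ with hL
  have hLm : ∀ n, MeasurableSet (L n) := fun n =>
    ((e.symm.measurable.iterate n) hI).inter <| MeasurableSet.iInter fun j =>
      MeasurableSet.iInter fun _ => (e.symm.measurable.iterate j) hI.compl
  have hLaux : ∀ m n, m < n → Disjoint (L m) (L n) := by
    intro m n h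
    refine Set.disjoint_left.mpr fun y hym hyn => ?_
    have h1 : (⇑e.symm)^[m] y ∈ I := hym.1
    have h2 : (⇑e.symm)^[m] y ∉ I := by
      have := hyn.2
      simp only [mem_iInter] at this
      exact this m h
    exact h2 h1
  have hLd : Pairwise (Function.onFun Disjoint L) := by
    intro m n hmn
    rcases lt_or_gt_of_ne hmn with h | h
    · exact hLaux m n h
    · exact (hLaux n m h).symm
  -- the levels cover almost everything
  have hLcov : ∀ᵐ y ∂μ, y ∈ ⋃ n, L n := by
    filter_upwards [kacAux_ae_return μ (⇑e.symm) hergs I hI hIpos] with y hy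
    obtain ⟨n, hn⟩ := hy
    have hne : {k : ℕ | (⇑e.symm)^[k] y ∈ I}.Nonempty := ⟨n + 1, hn⟩
    refine mem_iUnion.mpr ⟨sInf {k : ℕ | (⇑e.symm)^[k] y ∈ I}, Nat.sInf_mem hne, ?_⟩
    simp only [mem_iInter, mem_compl_iff, mem_preimage]
    exact fun j hj => Nat.notMem_of_lt_sInf hj
  -- the base sets
  set A : ℕ → Set X := fun n =>
    I ∩ ⋂ (i : ℕ) (_ : 1 ≤ i) (_ : i ≤ n), f^[i] ⁻¹' Iᶜ with hA
  have hAm : ∀ n, MeasurableSet (A n) := fun n =>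
    hI.inter <| MeasurableSet.iInter fun i => MeasurableSet.iInter fun _ =>
      MeasurableSet.iInter fun _ => (hfm.iterate i) hI.compl
  -- the key identity A n = f^[n] ⁻¹' (L n)
  have hsymm_iter : ∀ (j n : ℕ), j ≤ n → ∀ x, (⇑e.symm)^[j] (f^[n] x) = f^[n - j] x := by
    intro j n hj x
    have h1 : f^[n] x = f^[j] (f^[n - j] x) := by
      rw [← Function.iterate_add_apply]
      congr 1
      omega
    rw [h1, ← hef]
    exact Function.LeftInverse.iterate e.symm_apply_apply j _
  have hAL : ∀ n, A n = f^[n] ⁻¹' (L n) := by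
    intro n
    ext x
    simp only [hA, hL, mem_inter_iff, mem_iInter, mem_preimage, mem_compl_iff]
    constructor
    · rintro ⟨hxI, hni⟩
      refine ⟨by rw [hsymm_iter n n le_rfl]; simpa using hxI, fun j hj => ?_⟩
      rw [hsymm_iter j n hj.le]
      exact hni (n - j) (by omega) (by omega)
    · rintro ⟨hxI, hni⟩
      rw [hsymm_iter n n le_rfl] at hxI
      simp only [Nat.sub_self, Function.iterate_zero, id_eq] at hxI
      refine ⟨hxI, fun i hi1 hi2 => ?_⟩
      have := hni (n - i) (by omega)
      rwa [hsymm_iter (n - i) n (by omega), Nat.sub_sub_self hi2] at this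
  -- embedding of iterates
  have hfe : ∀ n, MeasurableEmbedding (f^[n]) := by
    intro n
    induction n with
    | zero => simpa using MeasurableEmbedding.id
    | succ n ih =>
        rw [Function.iterate_succ]
        exact ih.comp (hef ▸ e.measurableEmbedding)
  -- the summands
  set T : ℕ → X → ℝ := fun n => (A n).indicator fun x => g (f^[n] x) with hT
  have hTm : ∀ n, Measurable (T n) := fun n => (hgm.comp (hfm.iterate n)).indicator (hAm n)
  have hTcomp : ∀ n, T n = ((L n).indicator g) ∘ f^[n] := by
    intro n
    funext x
    simp only [hT, hAL n, Function.comp_apply]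
    exact Set.indicator_comp_right (f^[n]) (g := g)
  -- per-level integral identities
  have hTint : ∀ n, ∫ x, T n x ∂μ = ∫ x, (L n).indicator g x ∂μ := by
    intro n
    rw [hTcomp n]
    exact (hmp.iterate n).integral_comp (hfe n) _
  have hTlint : ∀ n, ∫⁻ x, ‖T n x‖₊ ∂μ = ∫⁻ x, ‖(L n).indicator g x‖₊ ∂μ := by
    intro n
    rw [hTcomp n]
    exact (hmp.iterate n).lintegral_comp (measurable_coe_nnreal_ennreal.comp
      ((hgm.indicator (hLm n)).nnnorm))
  -- summability of the lintegrals
  have hnorm_ind : ∀ n (y : X), (‖(L n).indicator g y‖₊ : ℝ≥0∞)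
      = (L n).indicator (fun y => (‖g y‖₊ : ℝ≥0∞)) y := by
    intro n y
    by_cases hy : y ∈ L n <;> simp [Set.indicator_of_mem, Set.indicator_of_notMem, hy]
  have hsum_fin : ∑' n, ∫⁻ x, ‖T n x‖₊ ∂μ < ∞ := by
    calc ∑' n, ∫⁻ x, ‖T n x‖₊ ∂μ
        = ∑' n, ∫⁻ y, (L n).indicator (fun y => (‖g y‖₊ : ℝ≥0∞)) y ∂μ := by
          simp_rw [hTlint, hnorm_ind]
      _ = ∫⁻ y, ∑' n, (L n).indicator (fun y => (‖g y‖₊ : ℝ≥0∞)) y ∂μ := by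
          exact (lintegral_tsum fun n =>
            ((hgm.nnnorm.coe_nnreal_ennreal).indicator (hLm n)).aemeasurable).symm
      _ ≤ ∫⁻ y, (‖g y‖₊ : ℝ≥0∞) ∂μ := by
          refine lintegral_mono fun y => ?_
          by_cases hy : ∃ n, y ∈ L n
          · obtain ⟨n, hn⟩ := hy
            rw [tsum_eq_single n]
            · simp [Set.indicator_of_mem hn]
            · intro m hm
              exact Set.indicator_of_notMem
                (fun hym => (Set.disjoint_left.mp (hLd hm) hym) hn) _
          · push_neg at hy
            simp [Set.indicator_of_notMem (hy _)]
      _ < ∞ := hg.hasFiniteIntegral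
  -- pointwise identification
  set K : X → ℝ := I.indicator (fun x => ∑ k ∈ Finset.range (retTime f I x), g (f^[k] x))
    with hK
  have hkey : ∀ᵐ x ∂μ, (∀ n, n ∉ Finset.range (retTime f I x) → T n x = 0) ∧
      K x = ∑ n ∈ Finset.range (retTime f I x), T n x := by
    filter_upwards [kacAux_ae_return μ f herg I hI hIpos] with x hx
    by_cases hxI : x ∈ I
    · obtain ⟨hN1, hNI, hNmin⟩ := retTime_spec hx
      have hmemA : ∀ n, x ∈ A n ↔ n < retTime f I x := by
        intro n
        simp only [hA, mem_inter_iff, mem_iInter, mem_compl_iff, mem_preimage]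
        constructor
        · rintro ⟨-, hni⟩
          by_contra hn
          exact hni (retTime f I x) hN1 (by omega) hNI
        · intro hn
          exact ⟨hxI, fun i h1 h2 => hNmin i h1 (by omega)⟩
      have hTx1 : ∀ n, n < retTime f I x → T n x = g (f^[n] x) := fun n hn =>
        Set.indicator_of_mem ((hmemA n).mpr hn) _
      have hTx2 : ∀ n, ¬ n < retTime f I x → T n x = 0 := fun n hn =>
        Set.indicator_of_notMem (fun h => hn ((hmemA n).mp h)) _
      refine ⟨fun n hn => hTx2 n (by simpa using hn), ?_⟩
      rw [hK, Set.indicator_of_mem hxI]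
      exact Finset.sum_congr rfl fun n hn => (hTx1 n (Finset.mem_range.mp hn)).symm
    · have hT0 : ∀ n, T n x = 0 := fun n =>
        Set.indicator_of_notMem (fun h => hxI h.1) _
      refine ⟨fun n _ => hT0 n, ?_⟩
      rw [hK, Set.indicator_of_notMem hxI]
      simp [hT0]
  have h_ae : (fun x => ∑' n, T n x) =ᵐ[μ] K := by
    filter_upwards [hkey] with x ⟨h1, h2⟩
    rw [tsum_eq_sum h1, h2]
  -- measurability of K
  have hKm : Measurable K := by
    have h1 : Measurable (fun p : X × ℕ => ∑ k ∈ Finset.range p.2, g (f^[k] p.1)) := by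
      refine measurable_from_prod_countable_left fun n => ?_
      show Measurable fun x : X => ∑ k ∈ Finset.range n, g (f^[k] x)
      exact Finset.measurable_sum _ fun k _ => hgm.comp (hfm.iterate k)
    exact ((h1.comp (measurable_id.prodMk (measurable_retTime hfm hI))).indicator hI)
  -- integrability of K
  have hbound : ∀ᵐ x ∂μ, (‖K x‖₊ : ℝ≥0∞) ≤ ∑' n, (‖T n x‖₊ : ℝ≥0∞) := by
    filter_upwards [hkey] with x ⟨h1, h2⟩
    rw [h2]
    calc (‖∑ n ∈ Finset.range (retTime f I x), T n x‖₊ : ℝ≥0∞)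
        ≤ ∑ n ∈ Finset.range (retTime f I x), (‖T n x‖₊ : ℝ≥0∞) := by
          rw [← ENNReal.coe_finset_sum]
          exact ENNReal.coe_le_coe.2 (nnnorm_sum_le _ _)
      _ ≤ ∑' n, (‖T n x‖₊ : ℝ≥0∞) := ENNReal.sum_le_tsum _
  have hKint : Integrable K μ := by
    refine ⟨hKm.aestronglyMeasurable, ?_⟩
    rw [hasFiniteIntegral_def]
    calc ∫⁻ x, (‖K x‖₊ : ℝ≥0∞) ∂μ
        ≤ ∫⁻ x, ∑' n, (‖T n x‖₊ : ℝ≥0∞) ∂μ := lintegral_mono_ae hbound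
      _ = ∑' n, ∫⁻ x, (‖T n x‖₊ : ℝ≥0∞) ∂μ :=
          lintegral_tsum fun n => ((hTm n).nnnorm.coe_nnreal_ennreal).aemeasurable
      _ < ∞ := hsum_fin
  refine ⟨hKint, ?_⟩
  have hcov_eq : (⋃ n, L n) =ᵐ[μ] (univ : Set X) := Filter.eventuallyEq_univ.mpr hLcov
  calc ∫ x, K x ∂μ
      = ∫ x, ∑' n, T n x ∂μ := (integral_congr_ae h_ae).symm
    _ = ∑' n, ∫ x, T n x ∂μ :=
        integral_tsum (fun n => (hTm n).aestronglyMeasurable) hsum_fin.ne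
    _ = ∑' n, ∫ x in L n, g x ∂μ := by
        refine tsum_congr fun n => ?_
        rw [hTint n, integral_indicator (hLm n)]
    _ = ∫ x in ⋃ n, L n, g x ∂μ :=
        (integral_iUnion hLm hLd hg.integrableOn).symm
    _ = ∫ x in (univ : Set X), g x ∂μ := setIntegral_congr_set hcov_eq
    _ = ∫ x, g x ∂μ := by rw [setIntegral_univ]

end KacAux

open Set Function ENNReal in
/-- The 'almost cylinder' case of the Kac-type formula for suspension flows: for the
set `A = {(x,t) : x ∈ I, h₁(x) ≤ t ≤ h₁(x)+c}` with parallel sides of width `c`, the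
mean of the return time `N(x,t) = τ^{n_I}(x) - t + h₁(f^{n_I(x)}(x))` with respect to
the normalized measure `(1/(c·μ(I)))·dμ dt` on `A` equals
`c/2 + (1/μ(I)) ∫ (τ - c·χ_I) dμ`. -/
theorem kac_suspension_almost_cylinder {X : Type*} [MeasurableSpace X] [Nonempty X]
    (μ : Measure X) [IsProbabilityMeasure μ] (f : X → X) (herg : Ergodic f μ)
    (hbij : Function.Bijective f) (hinv : Measurable (Function.invFun f))
    (τ : X → ℝ) (hτint : Integrable τ μ) (hτpos : ∀ x, 0 < τ x)
    (h₁ : X → ℝ) (hh₁ : Measurable h₁) (c : ℝ) (hc : 0 < c)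
    (I : Set X) (hI : MeasurableSet I) (hIpos : 0 < μ I)
    (hord : ∀ x ∈ I, 0 ≤ h₁ x ∧ h₁ x + c ≤ τ x) :
    (1 / (c * (μ I).toReal)) *
        (∫ x in I, (∫ t in h₁ x..(h₁ x + c),
          ((∑ k ∈ Finset.range (retTime f I x), τ (f^[k] x)) - t
            + h₁ (f^[retTime f I x] x))) ∂μ)
      = c / 2 + (1 / (μ I).toReal) * ∫ x, (τ x - c * I.indicator 1 x) ∂μ := by
  have hmp : MeasurePreserving f μ μ := herg.toMeasurePreserving
  have hfm : Measurable f := hmp.measurable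
  set e : X ≃ᵐ X :=
    { toEquiv := ⟨f, Function.invFun f, Function.leftInverse_invFun hbij.1,
        Function.rightInverse_invFun hbij.2⟩
      measurable_toFun := hfm
      measurable_invFun := hinv } with he
  have hef : ⇑e = f := rfl
  -- measurable version of τ
  set τ' : X → ℝ := hτint.1.mk τ with hτ'
  have hτ'm : Measurable τ' := hτint.1.stronglyMeasurable_mk.measurable
  have hττ' : τ =ᵐ[μ] τ' := hτint.1.ae_eq_mk
  have hτ'int : Integrable τ' μ := hτint.congr hττ'
  -- the truncated height function
  set hbar : X → ℝ := I.indicator h₁ with hhbar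
  have hbarm : Measurable hbar := hh₁.indicator hI
  have hbarint : Integrable hbar μ := by
    refine hτint.mono hbarm.aestronglyMeasurable (ae_of_all _ fun x => ?_)
    by_cases hx : x ∈ I
    · rw [hhbar, Set.indicator_of_mem hx]
      have h2 := hord x hx
      rw [Real.norm_eq_abs, Real.norm_eq_abs, abs_of_nonneg h2.1]
      have : h₁ x ≤ τ x := by linarith [h2.2]
      exact this.trans (le_abs_self _)
    · rw [hhbar, Set.indicator_of_notMem hx]
      simp [abs_nonneg]
  set g₂ : X → ℝ := fun x => hbar (f x) - hbar x with hg₂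
  have hg₂m : Measurable g₂ := (hbarm.comp hfm).sub hbarm
  have hbarfint : Integrable (fun x => hbar (f x)) μ :=
    (hmp.integrable_comp hbarm.aestronglyMeasurable).mpr hbarint
  have hg₂int : Integrable g₂ μ := hbarfint.sub hbarint
  have hg₂zero : ∫ x, g₂ x ∂μ = 0 := by
    rw [hg₂, integral_sub hbarfint hbarint]
    have : ∫ x, hbar (f x) ∂μ = ∫ x, hbar x ∂μ := by
      have := (show MeasurePreserving (⇑e) μ μ from hmp).integral_comp' hbar
      simpa [hef] using this
    rw [this, sub_self]
  obtain ⟨hu_int, hu_val⟩ := kac_core μ f herg e hef I hI hIpos τ' hτ'm hτ'int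
  obtain ⟨hv_int, hv_val⟩ := kac_core μ f herg e hef I hI hIpos g₂ hg₂m hg₂int
  -- return point lands in I
  have hfIret : ∀ x ∈ I, f^[retTime f I x] x ∈ I := by
    intro x hx
    by_cases h : ∃ n : ℕ, f^[n + 1] x ∈ I
    · exact (retTime_spec h).2.1
    · push_neg at h
      have h0 : retTime f I x = 0 := by
        have hemp : {k : ℕ | 1 ≤ k ∧ f^[k] x ∈ I} = ∅ := by
          ext k
          simp only [mem_setOf_eq, mem_empty_iff_false, iff_false, not_and]
          intro hk1 hk2
          exact h (k - 1) (by simpa [Nat.sub_add_cancel hk1] using hk2)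
        unfold retTime; rw [hemp]; exact Nat.sInf_empty
      rw [h0]; simpa using hx
  -- identify v
  have hv_eq : I.indicator (fun x => ∑ k ∈ Finset.range (retTime f I x), g₂ (f^[k] x))
      = I.indicator (fun x => h₁ (f^[retTime f I x] x) - h₁ x) := by
    funext x
    by_cases hx : x ∈ I
    · rw [Set.indicator_of_mem hx, Set.indicator_of_mem hx]
      have hterm : ∀ k, g₂ (f^[k] x) = hbar (f^[k + 1] x) - hbar (f^[k] x) := by
        intro k
        rw [hg₂]
        simp only
        rw [Function.iterate_succ_apply']
      calc ∑ k ∈ Finset.range (retTime f I x), g₂ (f^[k] x)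
          = ∑ k ∈ Finset.range (retTime f I x), (hbar (f^[k + 1] x) - hbar (f^[k] x)) :=
            Finset.sum_congr rfl fun k _ => hterm k
        _ = hbar (f^[retTime f I x] x) - hbar (f^[0] x) :=
            Finset.sum_range_sub (fun k => hbar (f^[k] x)) _
        _ = h₁ (f^[retTime f I x] x) - h₁ x := by
            rw [hhbar, Function.iterate_zero_apply,
              Set.indicator_of_mem (hfIret x hx), Set.indicator_of_mem hx]
    · rw [Set.indicator_of_notMem hx, Set.indicator_of_notMem hx]
  rw [hv_eq] at hv_int hv_val
  -- the combined function
  set w : X → ℝ := fun x => (∑ k ∈ Finset.range (retTime f I x), τ (f^[k] x))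
      + (h₁ (f^[retTime f I x] x) - h₁ x) with hw
  have hiter_ae : ∀ᵐ x ∂μ, ∀ k : ℕ, τ (f^[k] x) = τ' (f^[k] x) := by
    rw [ae_all_iff]
    exact fun k => (hmp.iterate k).quasiMeasurePreserving.ae_eq_comp hττ'
  have hw_ae : I.indicator w =ᵐ[μ]
      (fun x => I.indicator (fun x => ∑ k ∈ Finset.range (retTime f I x), τ' (f^[k] x)) x
        + I.indicator (fun x => h₁ (f^[retTime f I x] x) - h₁ x) x) := by
    filter_upwards [hiter_ae] with x hx
    by_cases hxI : x ∈ I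
    · rw [Set.indicator_of_mem hxI, Set.indicator_of_mem hxI, Set.indicator_of_mem hxI, hw]
      simp only
      congr 1
      exact Finset.sum_congr rfl fun k _ => hx k
    · rw [Set.indicator_of_notMem hxI, Set.indicator_of_notMem hxI,
        Set.indicator_of_notMem hxI]
      simp
  have hwind_int : Integrable (I.indicator w) μ := (hu_int.add hv_int).congr hw_ae.symm
  have hwind_val : ∫ x, I.indicator w x ∂μ = ∫ x, τ x ∂μ := by
    rw [integral_congr_ae hw_ae, integral_add hu_int hv_int, hu_val, hv_val, hg₂zero,
      add_zero, integral_congr_ae hττ'.symm]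
  have hwI : IntegrableOn w I μ := (integrable_indicator_iff hI).mp hwind_int
  have hwI_val : ∫ x in I, w x ∂μ = ∫ x, τ x ∂μ := by
    rw [← integral_indicator hI]
    exact hwind_val
  -- inner interval integral
  have hinner : ∀ x,
      (∫ t in h₁ x..(h₁ x + c),
        ((∑ k ∈ Finset.range (retTime f I x), τ (f^[k] x)) - t
          + h₁ (f^[retTime f I x] x))) = c * w x - c ^ 2 / 2 := by
    intro x
    set S := ∑ k ∈ Finset.range (retTime f I x), τ (f^[k] x) with hS
    set H := h₁ (f^[retTime f I x] x) with hH
    have hfun : (fun t => S - t + H) = fun t : ℝ => (S + H) - t := by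
      funext t; ring
    rw [hfun, intervalIntegral.integral_sub intervalIntegrable_const
      intervalIntegral.intervalIntegrable_id, intervalIntegral.integral_const, integral_id]
    rw [hw]
    simp only [smul_eq_mul]
    ring
  -- finish
  have hμI : (0:ℝ) < (μ I).toReal := ENNReal.toReal_pos hIpos.ne' (measure_ne_top μ I)
  have hconst_int : Integrable (fun x => c * I.indicator (1 : X → ℝ) x) μ :=
    ((integrable_const (1 : ℝ)).indicator hI).const_mul c
  have hRHS : ∫ x, (τ x - c * I.indicator 1 x) ∂μ = (∫ x, τ x ∂μ) - c * (μ I).toReal := by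
    rw [integral_sub hτint hconst_int, integral_const_mul, integral_indicator_one hI]
    rfl
  have hLHSint : ∫ x in I, (∫ t in h₁ x..(h₁ x + c),
      ((∑ k ∈ Finset.range (retTime f I x), τ (f^[k] x)) - t
        + h₁ (f^[retTime f I x] x))) ∂μ
      = c * (∫ x, τ x ∂μ) - (μ I).toReal * (c ^ 2 / 2) := by
    simp_rw [hinner]
    rw [integral_sub (hwI.const_mul c) (integrableOn_const (s := I) (μ := μ) (C := c ^ 2 / 2)),
      integral_const_mul, hwI_val, setIntegral_const]
    simp [smul_eq_mul, Measure.real]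
  rw [hLHSint, hRHS]
  field_simp
  ring
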